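/- Let R > 0 and c > 0 satisfy c·θ_hl > q·R and c·R > (θ_hl − θ_ig)/θ_ig. Then the partial derivative of G with respect to c at (R,c), namely qR(e^{cR} − 1) − c·θ_ig·e^{cR}(2 + cR) + 2c·θ_hl, is strictly negative. -/

import Mathlib

open Set Filter

/-- The transcendental function `G(R,c) = q(e^{cR} − 1 − cR) − c²(θ_ig e^{cR} − θ_hl)`. -/
noncomputable def G (q θig θhl R c : ℝ) : ℝ :=
  q * (Real.exp (c * R) - 1 - c * R) - c ^ 2 * (θig * Real.exp (c * R) - θhl)

lemma hasDerivG (q θig θhl R c : ℝ) :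
    HasDerivAt (fun c' => G q θig θhl R c')
      (q * R * (Real.exp (c * R) - 1) - c * θig * Real.exp (c * R) * (2 + c * R)
        + 2 * c * θhl) c := by
  have hexp : HasDerivAt (fun c' : ℝ => Real.exp (c' * R)) (Real.exp (c * R) * (1 * R)) c :=
    ((hasDerivAt_id c).mul_const R).exp
  have h1 : HasDerivAt (fun c' : ℝ => Real.exp (c' * R) - 1 - c' * R)
      (Real.exp (c * R) * (1 * R) - 1 * R) c :=
    (hexp.sub_const 1).sub ((hasDerivAt_id c).mul_const R)
  have h2 : HasDerivAt (fun c' : ℝ => c' ^ 2 * (θig * Real.exp (c' * R) - θhl))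
      (2 * c ^ 1 * (θig * Real.exp (c * R) - θhl)
        + c ^ 2 * (θig * (Real.exp (c * R) * (1 * R)))) c := by
    exact (hasDerivAt_pow 2 c).mul ((hexp.const_mul θig).sub_const θhl)
  have := (h1.const_mul q).sub h2
  refine HasDerivAt.congr_deriv this ?_
  ring

/-- If `(R,c)` lies in the interior of `Q₊` and `cR > (θ_hl − θ_ig)/θ_ig`, then the
partial derivative of `G` with respect to `c` at `(R,c)`, namely
`qR(e^{cR} − 1) − cθ_ig e^{cR}(2 + cR) + 2cθ_hl`, is strictly negative. -/
theorem stmt9 (q θig θhl : ℝ) (hq : 0 < q) (h1 : 0 < θig) (h2 : θig < θhl)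
    (R c : ℝ) (hR : 0 < R) (hc : 0 < c) (hQ : q * R < c * θhl)
    (hcR : (θhl - θig) / θig < c * R) :
    deriv (fun c' => G q θig θhl R c') c =
      q * R * (Real.exp (c * R) - 1) - c * θig * Real.exp (c * R) * (2 + c * R)
        + 2 * c * θhl ∧
    q * R * (Real.exp (c * R) - 1) - c * θig * Real.exp (c * R) * (2 + c * R)
        + 2 * c * θhl < 0 := by
  constructor
  · exact (hasDerivG q θig θhl R c).deriv
  · set E := Real.exp (c * R) with hE
    have hcR0 : 0 < c * R := mul_pos hc hR
    have hE1 : 1 + c * R < E := by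
      have := Real.add_one_lt_exp (ne_of_gt hcR0)
      linarith [this]
    have hE0 : (0:ℝ) < E := Real.exp_pos _
    have hEm1 : 0 < E - 1 := by linarith
    have hth : θhl < θig * (1 + c * R) := by
      have := (div_lt_iff₀ h1).mp hcR
      nlinarith
    -- qR(E-1) < cθhl(E-1)
    have step1 : q * R * (E - 1) < c * θhl * (E - 1) := by nlinarith
    -- θhl (E+1) < θig (1+cR)(E+1) ≤ θig (2+cR) E
    have step2 : θhl * (E + 1) < θig * (2 + c * R) * E := by nlinarith
    nlinarith
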